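/- Every I-favorable topological space is universally Kuratowski–Ulam. -/

import Mathlib

universe u v

/-- A topological space is I-favorable if Player I has a winning strategy in the open-open
game: a function `σ` assigning to each finite sequence of nonempty open sets a nonempty open
set, such that whenever the nonempty open sets `V n` satisfy `V n ⊆ σ (V 0, …, V (n-1))` for
all `n`, the union `⋃ n, V n` is dense. -/
def IFavorable (X : Type u) [TopologicalSpace X] : Prop :=
  ∃ σ : List {U : Set X // IsOpen U ∧ U.Nonempty} → {U : Set X // IsOpen U ∧ U.Nonempty},
    ∀ V : ℕ → {U : Set X // IsOpen U ∧ U.Nonempty},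
      (∀ n, (V n : Set X) ⊆ (σ (List.ofFn fun i : Fin n => V i) : Set X)) →
      Dense (⋃ n, (V n : Set X))

/-- A space `Y` is universally Kuratowski–Ulam if for every space `X` and every meager
subset `A` of `X × Y`, the set of `x ∈ X` whose section `Aₓ` is nonmeager is meager. -/
def UniversallyKuratowskiUlam (Y : Type v) [TopologicalSpace Y] : Prop :=
  ∀ (X : Type u) (_ : TopologicalSpace X) (A : Set (X × Y)), IsMeagre A →
    IsMeagre {x : X | ¬IsMeagre {y : Y | (x, y) ∈ A}}

namespace KUAux

variable {X : Type u} {Y : Type v} [TopologicalSpace X] [TopologicalSpace Y]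

/-- Nonempty open sets. -/
abbrev NOpen (Z : Type*) [TopologicalSpace Z] := {U : Set Z // IsOpen U ∧ U.Nonempty}

/-- pairs of moves; chains are stored reversed (most recent first). -/
abbrev P (X Y : Type*) [TopologicalSpace X] [TopologicalSpace Y] := NOpen X × NOpen Y

def lastU : List (P X Y) → Set X
  | [] => Set.univ
  | p :: _ => (p.1 : Set X)

lemma isOpen_lastU (l : List (P X Y)) : IsOpen (lastU l) := by
  cases l with
  | nil => exact isOpen_univ
  | cons p _ => exact p.1.2.1

lemma nonempty_lastU [Nonempty X] (l : List (P X Y)) : (lastU l).Nonempty := by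
  cases l with
  | nil => exact Set.univ_nonempty
  | cons p _ => exact p.1.2.2

def Vlist (l : List (P X Y)) : List (NOpen Y) := (l.map (·.2)).reverse

lemma Vlist_cons (p : P X Y) (l : List (P X Y)) :
    Vlist (p :: l) = Vlist l ++ [p.2] := by
  simp [Vlist]

variable (F : Set (X × Y)) (σ : List (NOpen Y) → NOpen Y)

def Adm (l : List (P X Y)) : Set (P X Y) :=
  {p | (p.1 : Set X) ⊆ lastU l ∧ (p.2 : Set Y) ⊆ (σ (Vlist l) : Set Y) ∧
    Disjoint ((p.1 : Set X) ×ˢ (p.2 : Set Y)) F}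

lemma exists_max [Nonempty X] (hF : IsClosed F) (hFi : interior F = ∅)
    (l : List (P X Y)) :
    ∃ T : Set (P X Y), T ⊆ Adm F σ l ∧
      (T.Pairwise fun p q => Disjoint (p.1 : Set X) (q.1 : Set X)) ∧
      lastU l ⊆ closure (⋃ p ∈ T, (p.1 : Set X)) := by
  -- Zorn to get a maximal pairwise-disjoint subfamily of Adm
  obtain ⟨T, hT⟩ := zorn_subset
      {T : Set (P X Y) | T ⊆ Adm F σ l ∧
        T.Pairwise fun p q => Disjoint (p.1 : Set X) (q.1 : Set X)}
      (by
        intro c hc hchain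
        refine ⟨⋃₀ c, ⟨?_, ?_⟩, fun s hs => Set.subset_sUnion_of_mem hs⟩
        · exact Set.sUnion_subset fun t ht => (hc ht).1
        · intro p hp q hq hpq
          obtain ⟨s, hs, hps⟩ := hp
          obtain ⟨t, ht, hqt⟩ := hq
          rcases hchain.total hs ht with hst | hts
          · exact (hc ht).2 (hst hps) hqt hpq
          · exact (hc hs).2 hps (hts hqt) hpq)
  refine ⟨T, hT.prop.1, hT.prop.2, ?_⟩
  -- density of the union in lastU l
  by_contra hdense
  obtain ⟨a, ha, hacl⟩ := Set.not_subset.mp hdense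
  set W : Set X := lastU l ∩ (closure (⋃ p ∈ T, (p.1 : Set X)))ᶜ with hW
  have hWopen : IsOpen W := (isOpen_lastU l).inter isClosed_closure.isOpen_compl
  have hWne : W.Nonempty := ⟨a, ha, hacl⟩
  -- find a rectangle inside W ×ˢ σ(...) missing F
  obtain ⟨b, hb⟩ := (σ (Vlist l)).2.2
  have hsub : ¬ (W ×ˢ (σ (Vlist l) : Set Y) ⊆ F) := by
    intro hsub
    have : W ×ˢ (σ (Vlist l) : Set Y) ⊆ interior F :=
      (hWopen.prod (σ (Vlist l)).2.1).subset_interior_iff.mpr hsub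
    rw [hFi] at this
    exact (hWne.prod (σ (Vlist l)).2.2).ne_empty (Set.subset_empty_iff.mp this)
  obtain ⟨z, hzW, hzF⟩ := Set.not_subset.mp hsub
  obtain ⟨u, v, hu, hv, hz1, hz2, huv⟩ :=
    isOpen_prod_iff.mp hF.isOpen_compl z.1 z.2 hzF
  have hzW' : z.1 ∈ W := hzW.1
  have hzV : z.2 ∈ (σ (Vlist l) : Set Y) := hzW.2
  set U' : Set X := u ∩ W with hU'
  set V' : Set Y := v ∩ (σ (Vlist l) : Set Y) with hV'
  have hU'open : IsOpen U' := hu.inter hWopen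
  have hV'open : IsOpen V' := hv.inter (σ (Vlist l)).2.1
  have hU'ne : U'.Nonempty := ⟨z.1, hz1, hzW'⟩
  have hV'ne : V'.Nonempty := ⟨z.2, hz2, hzV⟩
  set q : P X Y := (⟨U', hU'open, hU'ne⟩, ⟨V', hV'open, hV'ne⟩) with hq
  have hqAdm : q ∈ Adm F σ l := by
    refine ⟨fun x hx => hx.2.1, fun y hy => hy.2, ?_⟩
    rw [Set.disjoint_left]
    rintro ⟨x, y⟩ ⟨hx, hy⟩ hxyF
    exact huv (Set.mk_mem_prod hx.1 hy.1) hxyF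
  have hqdisj : ∀ p ∈ T, Disjoint (q.1 : Set X) (p.1 : Set X) := by
    intro p hp
    rw [Set.disjoint_left]
    intro x hx hxp
    exact hx.2.2 (subset_closure (Set.mem_biUnion hp hxp))
  have hqT : q ∉ T := by
    intro hqT
    obtain ⟨x, hx⟩ := hU'ne
    exact (hqdisj q hqT).ne_of_mem hx hx rfl
  have hins : insert q T ∈
      {T : Set (P X Y) | T ⊆ Adm F σ l ∧
        T.Pairwise fun p q => Disjoint (p.1 : Set X) (q.1 : Set X)} := by
    constructor
    · exact Set.insert_subset hqAdm hT.prop.1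
    · refine Set.Pairwise.insert hT.prop.2 ?_
      intro p hp _
      exact ⟨hqdisj p hp, (hqdisj p hp).symm⟩
  have := hT.2 hins (Set.subset_insert q T)
  exact hqT (this (Set.mem_insert q T))

variable [Nonempty X] (hF : IsClosed F) (hFi : interior F = ∅)

noncomputable def fam (l : List (P X Y)) : Set (P X Y) :=
  (exists_max F σ hF hFi l).choose

lemma fam_subset (l : List (P X Y)) : fam F σ hF hFi l ⊆ Adm F σ l :=
  (exists_max F σ hF hFi l).choose_spec.1

lemma fam_pairwise (l : List (P X Y)) :
    (fam F σ hF hFi l).Pairwise fun p q => Disjoint (p.1 : Set X) (q.1 : Set X) :=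
  (exists_max F σ hF hFi l).choose_spec.2.1

lemma fam_dense (l : List (P X Y)) :
    lastU l ⊆ closure (⋃ p ∈ fam F σ hF hFi l, (p.1 : Set X)) :=
  (exists_max F σ hF hFi l).choose_spec.2.2

def Valid : List (P X Y) → Prop
  | [] => True
  | p :: l => p ∈ fam F σ hF hFi l ∧ Valid l

def G (n : ℕ) : Set X :=
  ⋃ (l : List (P X Y)) (_ : Valid F σ hF hFi l ∧ l.length = n), lastU l

lemma mem_G {n : ℕ} {x : X} :
    x ∈ G F σ hF hFi n ↔ ∃ l, Valid F σ hF hFi l ∧ l.length = n ∧ x ∈ lastU l := by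
  simp only [G, Set.mem_iUnion]
  exact ⟨fun ⟨l, ⟨h1, h2⟩, h3⟩ => ⟨l, h1, h2, h3⟩, fun ⟨l, h1, h2, h3⟩ => ⟨l, ⟨h1, h2⟩, h3⟩⟩

lemma isOpen_G (n : ℕ) : IsOpen (G F σ hF hFi n) :=
  isOpen_iUnion fun l => isOpen_iUnion fun _ => isOpen_lastU l

lemma dense_G (n : ℕ) : Dense (G F σ hF hFi n) := by
  induction n with
  | zero =>
      have : Set.univ ⊆ G F σ hF hFi 0 := fun x _ =>
        (mem_G F σ hF hFi).mpr ⟨[], trivial, rfl, Set.mem_univ x⟩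
      exact dense_univ.mono this
  | succ n ih =>
      rw [dense_iff_inter_open]
      intro W hWopen hWne
      obtain ⟨x, hxW, hxG⟩ := dense_iff_inter_open.mp ih W hWopen hWne
      obtain ⟨l, hlv, hln, hxl⟩ := (mem_G F σ hF hFi).mp hxG
      have hopen : IsOpen (W ∩ lastU l) := hWopen.inter (isOpen_lastU l)
      have hxcl : x ∈ closure (⋃ p ∈ fam F σ hF hFi l, (p.1 : Set X)) :=
        fam_dense F σ hF hFi l hxl
      obtain ⟨y, hyWl, hyU⟩ := mem_closure_iff.mp hxcl (W ∩ lastU l) hopen ⟨hxW, hxl⟩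
      obtain ⟨p, hp, hyp⟩ := Set.mem_iUnion₂.mp hyU
      refine ⟨y, hyWl.1, (mem_G F σ hF hFi).mpr ⟨p :: l, ⟨hp, hlv⟩, by simp [hln], hyp⟩⟩


lemma valid_unique : ∀ (n : ℕ) (x : X) (l₁ l₂ : List (P X Y)),
    Valid F σ hF hFi l₁ → Valid F σ hF hFi l₂ → l₁.length = n → l₂.length = n →
    x ∈ lastU l₁ → x ∈ lastU l₂ → l₁ = l₂ := by
  intro n
  induction n with
  | zero =>
      intro x l₁ l₂ _ _ h1 h2 _ _
      rw [List.length_eq_zero_iff] at h1 h2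
      rw [h1, h2]
  | succ n ih =>
      rintro x (_ | ⟨p₁, m₁⟩) (_ | ⟨p₂, m₂⟩) hv₁ hv₂ h1 h2 hx₁ hx₂
      · simp at h1
      · simp at h1
      · simp at h2
      · obtain ⟨hp₁, hm₁⟩ := hv₁
        obtain ⟨hp₂, hm₂⟩ := hv₂
        have hx₁' : x ∈ lastU m₁ := (fam_subset F σ hF hFi m₁ hp₁).1 hx₁
        have hx₂' : x ∈ lastU m₂ := (fam_subset F σ hF hFi m₂ hp₂).1 hx₂
        have hm : m₁ = m₂ := ih x m₁ m₂ hm₁ hm₂ (by simpa using h1) (by simpa using h2) hx₁' hx₂'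
        subst hm
        have hp : p₁ = p₂ := by
          by_contra hne
          exact (fam_pairwise F σ hF hFi m₁ hp₁ hp₂ hne).ne_of_mem hx₁ hx₂ rfl
        rw [hp]

/-- The key lemma: if `x` is in every `G n`, then the section of `F` at `x` is
nowhere dense. -/
lemma section_nowhereDense
    (hσ : ∀ V : ℕ → NOpen Y,
      (∀ n, (V n : Set Y) ⊆ (σ (List.ofFn fun i : Fin n => V i) : Set Y)) →
      Dense (⋃ n, ((V n : Set Y)))) (x : X)
    (hx : ∀ n, x ∈ G F σ hF hFi n) : IsNowhereDense {y : Y | (x, y) ∈ F} := by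
  have hc : ∀ n, ∃ l : List (P X Y), Valid F σ hF hFi l ∧ l.length = n ∧ x ∈ lastU l :=
    fun n => (mem_G F σ hF hFi).mp (hx n)
  set c : ℕ → List (P X Y) := fun n => (hc n).choose with hcdef
  have hcv : ∀ n, Valid F σ hF hFi (c n) := fun n => (hc n).choose_spec.1
  have hcl : ∀ n, (c n).length = n := fun n => (hc n).choose_spec.2.1
  have hcx : ∀ n, x ∈ lastU (c n) := fun n => (hc n).choose_spec.2.2
  have hcoh : ∀ n, ∃ p : P X Y, c (n + 1) = p :: c n ∧ p ∈ fam F σ hF hFi (c n) := by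
    intro n
    cases hcn : c (n + 1) with
    | nil => have := hcl (n + 1); rw [hcn] at this; simp at this
    | cons p m =>
        have hv := hcv (n + 1); rw [hcn] at hv
        obtain ⟨hp, hm⟩ := hv
        have hxm : x ∈ lastU m := by
          have := hcx (n + 1); rw [hcn] at this
          exact (fam_subset F σ hF hFi m hp).1 this
        have hlm : m.length = n := by
          have := hcl (n + 1); rw [hcn] at this; simpa using this
        have : m = c n := valid_unique F σ hF hFi n x m (c n) hm (hcv n) hlm (hcl n) hxm (hcx n)
        exact ⟨p, by rw [this], by rwa [this] at hp⟩
  set p : ℕ → P X Y := fun n => (hcoh n).choose with hpdef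
  have hpc : ∀ n, c (n + 1) = p n :: c n := fun n => (hcoh n).choose_spec.1
  have hpf : ∀ n, p n ∈ fam F σ hF hFi (c n) := fun n => (hcoh n).choose_spec.2
  set V : ℕ → NOpen Y := fun n => (p n).2 with hVdef
  have hVlist : ∀ n, Vlist (c n) = List.ofFn (fun i : Fin n => V i) := by
    intro n
    induction n with
    | zero =>
        have : c 0 = [] := List.length_eq_zero_iff.mp (hcl 0)
        rw [this]; simp [Vlist]
    | succ n ih =>
        rw [hpc n, Vlist_cons, ih, List.ofFn_succ']
        simp [List.concat_eq_append]
        rfl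
  have hVsub : ∀ n, (V n : Set Y) ⊆ (σ (List.ofFn fun i : Fin n => V i) : Set Y) := by
    intro n
    rw [← hVlist n]
    exact (fam_subset F σ hF hFi (c n) (hpf n)).2.1
  have hdense : Dense (⋃ n, ((V n : Set Y))) := hσ V hVsub
  have hxp : ∀ n, x ∈ ((p n).1 : Set X) := by
    intro n
    have := hcx (n + 1); rw [hpc n] at this; exact this
  have hdisj : ∀ n, ∀ y ∈ (V n : Set Y), (x, y) ∉ F := by
    intro n y hy hxy
    exact Set.disjoint_left.mp (fam_subset F σ hF hFi (c n) (hpf n)).2.2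
      (Set.mk_mem_prod (hxp n) hy) hxy
  have hsub : (⋃ n, ((V n : Set Y))) ⊆ {y : Y | (x, y) ∈ F}ᶜ := by
    rintro y hy
    obtain ⟨n, hn⟩ := Set.mem_iUnion.mp hy
    exact hdisj n y hn
  have hdense' : Dense ({y : Y | (x, y) ∈ F}ᶜ) := hdense.mono hsub
  have hclosed : IsClosed {y : Y | (x, y) ∈ F} := by
    have : {y : Y | (x, y) ∈ F} = Prod.mk x ⁻¹' F := rfl
    rw [this]
    exact hF.preimage (Continuous.prodMk_right x)
  rw [hclosed.isNowhereDense_iff, interior_eq_empty_iff_dense_compl]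
  exact hdense'

end KUAux

open KUAux in
/-- The key lemma in unbundled form. -/
lemma isMeagre_section_not_nowhereDense {X : Type u} {Y : Type v}
    [TopologicalSpace X] [TopologicalSpace Y] (h : IFavorable Y)
    (F : Set (X × Y)) (hF : IsClosed F) (hFi : interior F = ∅) :
    IsMeagre {x : X | ¬ IsNowhereDense {y : Y | (x, y) ∈ F}} := by
  rcases isEmpty_or_nonempty X with hX | hX
  · have : {x : X | ¬ IsNowhereDense {y : Y | (x, y) ∈ F}} = ∅ :=
      Set.eq_empty_of_isEmpty _
    rw [this]; exact IsMeagre.empty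
  obtain ⟨σ, hσ⟩ := h
  have hsub : {x : X | ¬ IsNowhereDense {y : Y | (x, y) ∈ F}} ⊆
      ⋃ n, (G F σ hF hFi n)ᶜ := by
    intro x hx
    by_contra hxn
    simp only [Set.mem_iUnion, Set.mem_compl_iff, not_exists, not_not] at hxn
    exact hx (section_nowhereDense F σ hF hFi hσ x hxn)
  refine IsMeagre.mono hsub (isMeagre_iUnion fun n => ?_)
  have hnwd : IsNowhereDense ((G F σ hF hFi n)ᶜ) := by
    rw [(isOpen_G F σ hF hFi n).isClosed_compl.isNowhereDense_iff, interior_compl,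
      (dense_G F σ hF hFi n).closure_eq, Set.compl_univ]
  exact isMeagre_iff_countable_union_isNowhereDense.mpr
    ⟨{(G F σ hF hFi n)ᶜ}, by simpa using hnwd, Set.countable_singleton _, by simp⟩


lemma aux_nwd_isMeagre {Z : Type*} [TopologicalSpace Z] {s : Set Z}
    (h : IsNowhereDense s) : IsMeagre s :=
  isMeagre_iff_countable_union_isNowhereDense.mpr
    ⟨{s}, by simpa using h, Set.countable_singleton _, by simp⟩

/-- Kucharski–Plewik: every I-favorable space is universally Kuratowski–Ulam. -/
theorem universallyKuratowskiUlam_of_iFavorable (Y : Type v) [TopologicalSpace Y]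
    (h : IFavorable Y) : UniversallyKuratowskiUlam.{u} Y := by
  intro X _ A hA
  obtain ⟨S, hSnwd, hScount, hsub⟩ := isMeagre_iff_countable_union_isNowhereDense.mp hA
  rcases S.eq_empty_or_nonempty with rfl | hSne
  · rw [Set.sUnion_empty, Set.subset_empty_iff] at hsub
    have : {x : X | ¬IsMeagre {y : Y | (x, y) ∈ A}} = ∅ := by
      ext x
      simp only [Set.mem_setOf_eq, Set.mem_empty_iff_false, iff_false, not_not]
      have : {y : Y | (x, y) ∈ A} = ∅ := by
        ext y
        simp only [Set.mem_setOf_eq, Set.mem_empty_iff_false, iff_false]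
        intro hy
        rw [hsub] at hy
        exact hy
      rw [this]; exact IsMeagre.empty
    rw [this]; exact IsMeagre.empty
  obtain ⟨f, rfl⟩ := Set.Countable.exists_eq_range hScount hSne
  set F : ℕ → Set (X × Y) := fun n => closure (f n) with hFdef
  have hFc : ∀ n, IsClosed (F n) := fun n => isClosed_closure
  have hFi : ∀ n, interior (F n) = ∅ := by
    intro n
    have : IsNowhereDense (F n) := (hSnwd (f n) (Set.mem_range_self n)).closure
    rwa [(hFc n).isNowhereDense_iff] at this
  have hkey : ∀ n, IsMeagre {x : X | ¬ IsNowhereDense {y : Y | (x, y) ∈ F n}} :=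
    fun n => isMeagre_section_not_nowhereDense h (F n) (hFc n) (hFi n)
  have hincl : {x : X | ¬IsMeagre {y : Y | (x, y) ∈ A}} ⊆
      ⋃ n, {x : X | ¬ IsNowhereDense {y : Y | (x, y) ∈ F n}} := by
    intro x hx
    by_contra hxn
    simp only [Set.mem_iUnion, Set.mem_setOf_eq, not_exists, not_not] at hxn
    refine hx ?_
    have hAsec : {y : Y | (x, y) ∈ A} ⊆ ⋃ n, {y : Y | (x, y) ∈ F n} := by
      intro y hy
      have := hsub hy
      obtain ⟨s, hs, hys⟩ := this
      obtain ⟨n, rfl⟩ := hs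
      exact Set.mem_iUnion.mpr ⟨n, subset_closure hys⟩
    exact IsMeagre.mono hAsec (isMeagre_iUnion fun n => aux_nwd_isMeagre (hxn n))
  exact IsMeagre.mono hincl (isMeagre_iUnion hkey)
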